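/- Let L ⊆ K be fields and suppose K/L is finitely generated as a field extension. Then the relative algebraic closure of L((t)) in K((t)) equals L̃((t)), where L̃ is the relative algebraic closure of L in K. -/

import Mathlib

/-- The ring homomorphism between Laurent series fields induced by applying a ring
homomorphism to each coefficient. -/
noncomputable def LaurentSeries.mapRingHom {R S : Type*} [CommRing R] [CommRing S]
    (f : R →+* S) : LaurentSeries R →+* LaurentSeries S where
  toFun x := x.map f
  map_one' := HahnSeries.map_one f.toMonoidWithZeroHom
  map_mul' x y := HahnSeries.map_mul (f : R →ₙ+* S)
  map_zero' := by ext; simp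
  map_add' x y := HahnSeries.map_add (f : R →+ S)

@[simp] lemma LaurentSeries.mapRingHom_coeff {R S : Type*} [CommRing R] [CommRing S]
    (φ : R →+* S) (x : LaurentSeries R) (n : ℤ) :
    (LaurentSeries.mapRingHom φ x).coeff n = φ (x.coeff n) := rfl

lemma LaurentSeries.mapRingHom_injective {R S : Type*} [CommRing R] [CommRing S]
    (φ : R →+* S) (h : Function.Injective φ) :
    Function.Injective (LaurentSeries.mapRingHom φ) := fun x y hxy => by
  ext n
  exact h (congrArg (fun z => HahnSeries.coeff z n) hxy)

set_option maxHeartbeats 1000000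
set_option synthInstance.maxHeartbeats 400000

open Polynomial IntermediateField

lemma linearIndependent_adjoin_transcendental
    {F K : Type*} [Field F] [Field K] [Algebra F K] {x : K}
    (hx : Transcendental F x) {ι : Type*} {v : ι → K}
    (hv : ∀ i, IsIntegral F (v i)) (hli : LinearIndependent F v) :
    LinearIndependent (adjoin F ({x} : Set K)) v := by
  classical
  rw [linearIndependent_iff'] at hli ⊢
  intro t g hsum j hj
  by_contra hgj
  have hrep : ∀ i : ι, ∃ r s : F[X], aeval x s ≠ 0 ∧ (g i : K) * aeval x s = aeval x r := by
    intro i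
    obtain ⟨r, s, hrs⟩ := (mem_adjoin_simple_iff F ((g i : K))).1 (g i).2
    by_cases hs : aeval x s = 0
    · exact ⟨0, 1, by simp, by simp [hrs, hs]⟩
    · exact ⟨r, s, hs, by rw [hrs]; field_simp⟩
  choose r s hs hrs using hrep
  set D : F[X] := ∏ i ∈ t, s i with hD
  have hDx : aeval x D ≠ 0 := by
    rw [hD, map_prod]
    exact Finset.prod_ne_zero_iff.2 fun i _ => hs i
  set q : ι → F[X] := fun i => r i * ∏ k ∈ t.erase i, s k with hqdef
  have hq : ∀ i ∈ t, aeval x (q i) = (g i : K) * aeval x D := by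
    intro i hi
    have hfac : aeval x D = aeval x (s i) * aeval x (∏ k ∈ t.erase i, s k) := by
      rw [← map_mul, hD, Finset.mul_prod_erase t s hi]
    rw [hqdef]
    simp only [map_mul]
    rw [← hrs i, hfac]
    ring
  have hsumK : ∑ i ∈ t, (g i : K) * v i = 0 := by
    calc ∑ i ∈ t, (g i : K) * v i = ∑ i ∈ t, g i • v i := by
          refine Finset.sum_congr rfl fun i _ => ?_
          rw [Algebra.smul_def]; rfl
      _ = 0 := hsum
  have hsumq : ∑ i ∈ t, aeval x (q i) * v i = 0 := by
    calc ∑ i ∈ t, aeval x (q i) * v i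
        = (∑ i ∈ t, (g i : K) * v i) * aeval x D := by
          rw [Finset.sum_mul]
          refine Finset.sum_congr rfl fun i hi => ?_
          rw [hq i hi]; ring
      _ = 0 := by rw [hsumK, zero_mul]
  have hqj : q j ≠ 0 := by
    intro h0
    have := hq j hj
    rw [h0, map_zero] at this
    have hgj' : (g j : K) ≠ 0 := by
      simpa using hgj
    exact hgj' (by
      rcases mul_eq_zero.1 this.symm with h | h
      · exact h
      · exact absurd h hDx)
  obtain ⟨n, hn⟩ : ∃ n, (q j).coeff n ≠ 0 := by
    by_contra h
    push_neg at h
    exact hqj (Polynomial.ext fun n => by simp [h n])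
  have hcoeff : ∑ i ∈ t, (q i).coeff n • v i ≠ 0 := by
    intro h0
    exact hn (hli t (fun i => (q i).coeff n) h0 j hj)
  -- build polynomial over the algebraic closure of F in K
  set A := algebraicClosure F K with hA
  have hvA : ∀ i, v i ∈ A := fun i => (mem_algebraicClosure_iff').2 (hv i)
  set P : Polynomial A := ∑ i ∈ t, ((q i).map (algebraMap F A)) * C (⟨v i, hvA i⟩ : A) with hP
  have hPmap : P.map (algebraMap A K) = ∑ i ∈ t, ((q i).map (algebraMap F K)) * C (v i) := by
    rw [hP, Polynomial.map_sum]
    refine Finset.sum_congr rfl fun i _ => ?_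
    rw [Polynomial.map_mul, Polynomial.map_map, ← IsScalarTower.algebraMap_eq, map_C]
    rfl
  have hPmapcoeff : (P.map (algebraMap A K)).coeff n ≠ 0 := by
    rw [hPmap]
    have : (∑ i ∈ t, ((q i).map (algebraMap F K)) * C (v i)).coeff n
        = ∑ i ∈ t, (q i).coeff n • v i := by
      rw [Polynomial.finset_sum_coeff]
      refine Finset.sum_congr rfl fun i _ => ?_
      rw [Polynomial.coeff_mul_C, Polynomial.coeff_map, Algebra.smul_def]
    rw [this]
    exact hcoeff
  have hPne : P ≠ 0 := by
    intro h0
    rw [h0, Polynomial.map_zero] at hPmapcoeff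
    simp at hPmapcoeff
  have hPeval : aeval x P = 0 := by
    rw [aeval_def, ← Polynomial.eval_map, hPmap]
    rw [Polynomial.eval_finset_sum]
    calc ∑ i ∈ t, (((q i).map (algebraMap F K)) * C (v i)).eval x
        = ∑ i ∈ t, aeval x (q i) * v i := by
          refine Finset.sum_congr rfl fun i _ => ?_
          rw [Polynomial.eval_mul, Polynomial.eval_C, Polynomial.eval_map, ← aeval_def]
      _ = 0 := hsumq
  have halgA : IsAlgebraic A x := ⟨P, hPne, hPeval⟩
  have hintA : IsIntegral A x := halgA.isIntegral
  have : IsIntegral F x := isIntegral_trans x hintA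
  exact hx this.isAlgebraic

universe w

lemma auxFin {K : Type w} [Field K] (s : Finset K) :
    ∀ (F : Type w) [Field F] [Algebra F K],
      IntermediateField.adjoin F (s : Set K) = ⊤ →
      FiniteDimensional F (algebraicClosure F K) := by
  classical
  induction s using Finset.induction_on with
  | empty =>
    intro F _ _ htop
    rw [Finset.coe_empty, IntermediateField.adjoin_empty] at htop
    have hbot : algebraicClosure F K = ⊥ := eq_bot_iff.2 (htop ▸ le_top)
    rw [hbot]
    exact Subalgebra.finite_bot (R := F) (A := K)
  | @insert x s₀ hxs ih =>
    intro F _ _ htop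
    rw [Finset.coe_insert] at htop
    set M := IntermediateField.adjoin F ({x} : Set K) with hMdef
    have hM : IntermediateField.adjoin (↥M) (s₀ : Set K) = ⊤ := by
      apply IntermediateField.restrictScalars_injective F
      rw [IntermediateField.adjoin_adjoin_left, IntermediateField.restrictScalars_top,
        Set.singleton_union]
      exact htop
    haveI hE : FiniteDimensional ↥M (algebraicClosure ↥M K) := ih (↥M) hM
    by_cases hxa : IsAlgebraic F x
    · -- x algebraic : same algebraic closure
      haveI : FiniteDimensional F ↥M :=
        IntermediateField.adjoin.finiteDimensional hxa.isIntegral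
      haveI : FiniteDimensional F (algebraicClosure ↥M K) :=
        FiniteDimensional.trans F (↥M) (algebraicClosure ↥M K)
      haveI : Algebra.IsIntegral F ↥M := Algebra.IsIntegral.of_finite F ↥M
      have hmem : ∀ a : K, a ∈ algebraicClosure F K ↔ a ∈ algebraicClosure (↥M) K := by
        intro a
        rw [mem_algebraicClosure_iff', mem_algebraicClosure_iff']
        exact ⟨fun h => h.tower_top, fun h => isIntegral_trans a h⟩
      let e : ↥(algebraicClosure (↥M) K) ≃ₗ[F] ↥(algebraicClosure F K) :=
        { toFun := fun a => ⟨a.1, (hmem a.1).2 a.2⟩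
          invFun := fun a => ⟨a.1, (hmem a.1).1 a.2⟩
          map_add' := fun a b => rfl
          map_smul' := fun c a => rfl
          left_inv := fun a => rfl
          right_inv := fun a => rfl }
      exact e.finiteDimensional
    · -- x transcendental
      have hrank : Module.rank F ↥(algebraicClosure F K)
          ≤ (Module.finrank ↥M (algebraicClosure ↥M K) : Cardinal) := by
        apply rank_le
        intro u hu
        have hinj : Function.Injective ((algebraicClosure F K).val.toLinearMap (R := F)) :=
          Subtype.val_injective
        have hu1 : LinearIndependent F
            (fun i : u => ((i : ↥(algebraicClosure F K)) : K)) :=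
          hu.map' (algebraicClosure F K).val.toLinearMap (LinearMap.ker_eq_bot.2 hinj)
        have hualg : ∀ i : u, IsIntegral F ((i : ↥(algebraicClosure F K)) : K) :=
          fun i => (mem_algebraicClosure_iff').1 (i : ↥(algebraicClosure F K)).2
        have h2 : LinearIndependent ↥M
            (fun i : u => ((i : ↥(algebraicClosure F K)) : K)) :=
          linearIndependent_adjoin_transcendental hxa hualg hu1
        let wfam : u → ↥(algebraicClosure ↥M K) :=
          fun i => ⟨((i : ↥(algebraicClosure F K)) : K), (hualg i).tower_top⟩
        have h3 : LinearIndependent ↥M wfam := by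
          apply LinearIndependent.of_comp (algebraicClosure ↥M K).val.toLinearMap
          exact h2
        simpa using h3.fintype_card_le_finrank
      have : Module.rank F ↥(algebraicClosure F K) < Cardinal.aleph0 :=
        lt_of_le_of_lt hrank (Cardinal.nat_lt_aleph0 _)
      exact Module.rank_lt_aleph0_iff.1 this

lemma finiteDimensional_algebraicClosure_of_fg
    {L K : Type*} [Field L] [Field K] [Algebra L K]
    (hfg : (⊤ : IntermediateField L K).FG) :
    FiniteDimensional L (algebraicClosure L K) := by
  obtain ⟨t, ht⟩ := hfg
  set L₀ := IntermediateField.adjoin L (∅ : Set K) with hL₀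
  have h0 : IntermediateField.adjoin ↥L₀ (t : Set K) = ⊤ := by
    apply IntermediateField.restrictScalars_injective L
    rw [IntermediateField.adjoin_adjoin_left, IntermediateField.restrictScalars_top,
      Set.empty_union]
    exact ht
  haveI h1 : FiniteDimensional ↥L₀ (algebraicClosure ↥L₀ K) := auxFin t ↥L₀ h0
  have hbotmem : ∀ y : ↥L₀, ∃ z : L, algebraMap L ↥L₀ z = y := by
    intro y
    have hy : (y : K) ∈ (⊥ : IntermediateField L K) := by
      rw [← IntermediateField.adjoin_empty L K]
      exact y.2
    obtain ⟨z, hz⟩ := IntermediateField.mem_bot.1 hy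
    refine ⟨z, Subtype.ext ?_⟩
    rw [← hz]
    exact (IsScalarTower.algebraMap_apply L ↥L₀ K z).symm
  haveI hZ : Algebra.IsIntegral L ↥L₀ := by
    refine ⟨fun y => ?_⟩
    obtain ⟨z, hz⟩ := hbotmem y
    rw [← hz]
    exact isIntegral_algebraMap
  haveI : FiniteDimensional L ↥L₀ :=
    Module.Finite.of_surjective (Algebra.linearMap L ↥L₀)
      (fun y => by obtain ⟨z, hz⟩ := hbotmem y; exact ⟨z, hz⟩)
  haveI : FiniteDimensional L (algebraicClosure ↥L₀ K) :=
    FiniteDimensional.trans L ↥L₀ (algebraicClosure ↥L₀ K)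
  have hmem : ∀ a : K, a ∈ algebraicClosure L K ↔ a ∈ algebraicClosure ↥L₀ K := by
    intro a
    rw [mem_algebraicClosure_iff', mem_algebraicClosure_iff']
    exact ⟨fun h => h.tower_top, fun h => isIntegral_trans a h⟩
  let e : ↥(algebraicClosure ↥L₀ K) ≃ₗ[L] ↥(algebraicClosure L K) :=
    { toFun := fun a => ⟨a.1, (hmem a.1).2 a.2⟩
      invFun := fun a => ⟨a.1, (hmem a.1).1 a.2⟩
      map_add' := fun a b => rfl
      map_smul' := fun c a => rfl
      left_inv := fun a => rfl
      right_inv := fun a => rfl }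
  exact e.finiteDimensional

namespace LaurentSeriesAlg

variable {L K : Type*} [Field L] [Field K] [Algebra L K]

/-- coefficient extraction as an additive monoid hom -/
noncomputable def coeffHom (R : Type*) [AddCommMonoid R] (n : ℤ) :
    LaurentSeries R →+ R where
  toFun x := x.coeff n
  map_zero' := rfl
  map_add' x y := rfl

lemma coeff_sum {R : Type*} [AddCommMonoid R] {ι : Type*} (s : Finset ι)
    (F : ι → LaurentSeries R) (n : ℤ) :
    (∑ i ∈ s, F i).coeff n = ∑ i ∈ s, (F i).coeff n :=
  map_sum (coeffHom R n) F s

lemma exists_poly_of_coeff_isAlgebraic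
    (hfg : (⊤ : IntermediateField L K).FG) (f : LaurentSeries K)
    (halg : ∀ n : ℤ, IsAlgebraic L (f.coeff n)) :
    ∃ p : Polynomial (LaurentSeries L), p ≠ 0 ∧
      Polynomial.eval₂ (LaurentSeries.mapRingHom (algebraMap L K)) f p = 0 := by
  classical
  set F := algebraicClosure L K with hF
  haveI : FiniteDimensional L ↥F := finiteDimensional_algebraicClosure_of_fg hfg
  -- lift f to a Laurent series over F
  set f' : LaurentSeries ↥F :=
    ⟨fun n => ⟨f.coeff n, (mem_algebraicClosure_iff).2 (halg n)⟩,
      f.isPWO_support.mono (by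
        intro n hn
        simp only [Function.mem_support] at hn ⊢
        exact fun h0 => hn (Subtype.ext h0))⟩ with hf'
  letI : Algebra (LaurentSeries L) (LaurentSeries ↥F) :=
    (LaurentSeries.mapRingHom (algebraMap L ↥F)).toAlgebra
  have halgmap : algebraMap (LaurentSeries L) (LaurentSeries ↥F)
      = LaurentSeries.mapRingHom (algebraMap L ↥F) := rfl
  -- module finiteness
  set b := Module.finBasis L ↥F with hb
  haveI : Module.Finite (LaurentSeries L) (LaurentSeries ↥F) := by
    refine ⟨⟨Finset.univ.image fun i => HahnSeries.C (b i), le_antisymm le_top ?_⟩⟩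
    rintro h -
    have hrepr : ∀ i, Function.support (fun n => b.repr (h.coeff n) i)
        ⊆ Function.support h.coeff := by
      intro i n hn
      simp only [Function.mem_support] at hn ⊢
      exact fun h0 => hn (by rw [h0]; simp)
    set g : Fin (Module.finrank L ↥F) → LaurentSeries L :=
      fun i => ⟨fun n => b.repr (h.coeff n) i, h.isPWO_support.mono (hrepr i)⟩ with hg
    have hdecomp : h = ∑ i, g i • (HahnSeries.C (b i) : LaurentSeries ↥F) := by
      ext n
      rw [coeff_sum]
      have : ∀ i, (g i • (HahnSeries.C (b i) : LaurentSeries ↥F)).coeff n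
          = b.repr (h.coeff n) i • b i := by
        intro i
        rw [Algebra.smul_def, halgmap]
        change ((LaurentSeries.mapRingHom (algebraMap L ↥F) (g i)) *
          HahnSeries.single 0 (b i)).coeff n = _
        rw [HahnSeries.coeff_mul_single_zero]
        rw [LaurentSeries.mapRingHom_coeff, Algebra.smul_def]
      rw [Finset.sum_congr rfl fun i _ => this i]
      exact congrArg Subtype.val (b.sum_repr (h.coeff n)).symm
    rw [hdecomp]
    refine Submodule.sum_mem _ fun i _ => ?_
    refine Submodule.smul_mem _ _ (Submodule.subset_span ?_)
    simp only [Finset.coe_image, Finset.coe_univ, Set.image_univ]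
    exact Set.mem_range_self i
  obtain ⟨p, pmonic, hp⟩ := IsIntegral.of_finite (LaurentSeries L) f'
  refine ⟨p, pmonic.ne_zero, ?_⟩
  have hcomp : (LaurentSeries.mapRingHom (algebraMap ↥F K)).comp
      (LaurentSeries.mapRingHom (algebraMap L ↥F))
      = LaurentSeries.mapRingHom (algebraMap L K) := by
    refine RingHom.ext fun x => ?_
    ext n
    exact (IsScalarTower.algebraMap_apply L ↥F K (x.coeff n)).symm
  have hff : LaurentSeries.mapRingHom (algebraMap ↥F K) f' = f := by
    ext n
    rfl
  have := congrArg (LaurentSeries.mapRingHom (algebraMap ↥F K)) hp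
  rw [Polynomial.hom_eval₂, halgmap, hcomp, hff, map_zero] at this
  exact this

end LaurentSeriesAlg

open Polynomial HahnSeries

lemma HahnSeries.leadingCoeff_mul' {K : Type*} [Field K] {x y : LaurentSeries K}
    (hx : x ≠ 0) (hy : y ≠ 0) : (x * y).leadingCoeff = x.leadingCoeff * y.leadingCoeff := by
  rw [leadingCoeff_eq, leadingCoeff_eq, leadingCoeff_eq, order_mul hx hy,
    coeff_mul_order_add_order, leadingCoeff_eq, leadingCoeff_eq]

lemma HahnSeries.leadingCoeff_pow' {K : Type*} [Field K] {x : LaurentSeries K}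
    (hx : x ≠ 0) (n : ℕ) : (x ^ n).leadingCoeff = x.leadingCoeff ^ n := by
  induction n with
  | zero => simp [leadingCoeff_eq]
  | succ n ih =>
    rw [pow_succ, leadingCoeff_mul' (pow_ne_zero _ hx) hx, ih, pow_succ]

lemma isAlgebraic_leadingCoeff_of_root
    {L K : Type*} [Field L] [Field K] [Algebra L K]
    {f : LaurentSeries K} (hf : f ≠ 0)
    {p : Polynomial (LaurentSeries L)} (hp : p ≠ 0)
    (hroot : Polynomial.eval₂ (LaurentSeries.mapRingHom (algebraMap L K)) f p = 0) :
    IsAlgebraic L (f.coeff f.order) := by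
  classical
  set φ := LaurentSeries.mapRingHom (algebraMap L K) with hφ
  have φinj : Function.Injective φ := fun x y hxy => by
    ext n
    exact (algebraMap L K).injective (congrArg (fun z => HahnSeries.coeff z n) hxy)
  have hne : p.support.Nonempty := by
    rwa [Polynomial.support_nonempty]
  set μ := f.order with hμ
  set a := f.coeff f.order with ha
  set E : ℕ → ℤ := fun i => (φ (p.coeff i)).order + (i • μ) with hE
  set e := p.support.inf' hne E with he
  have hle : ∀ i ∈ p.support, e ≤ E i := fun i hi => Finset.inf'_le E hi
  obtain ⟨i₀, hi₀, hEi₀⟩ := Finset.exists_mem_eq_inf' hne E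
  set c : ℕ → L := fun i => (p.coeff i).coeff (e - i • μ) with hc
  have hΦ : ∀ i ∈ p.support, φ (p.coeff i) ≠ 0 := by
    intro i hi h0
    exact Polynomial.mem_support_iff.1 hi (φinj (by rw [h0, map_zero]))
  have key : ∀ i ∈ p.support,
      (φ (p.coeff i) * f ^ i).coeff e = algebraMap L K (c i) * a ^ i := by
    intro i hi
    have hfi : f ^ i ≠ 0 := pow_ne_zero _ hf
    have horder : (φ (p.coeff i) * f ^ i).order = E i := by
      rw [order_mul (hΦ i hi) hfi, order_pow]
    have hcoe : algebraMap L K (c i) = (φ (p.coeff i)).coeff (e - i • μ) := rfl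
    rcases lt_or_eq_of_le (hle i hi) with hlt | heq
    · rw [coeff_eq_zero_of_lt_order (by rw [horder]; exact hlt)]
      have hlt' : e < (φ (p.coeff i)).order + i • μ := hlt
      rw [hcoe, coeff_eq_zero_of_lt_order (sub_lt_iff_lt_add.2 hlt'), zero_mul]
    · have h4 : e - i • μ = (φ (p.coeff i)).order := by
        rw [heq]
        show E i - i • μ = _
        rw [hE]
        exact add_sub_cancel_right _ _
      have h3 : e = (φ (p.coeff i)).order + (f ^ i).order := by
        rw [order_pow, heq]
      rw [h3, coeff_mul_order_add_order, leadingCoeff_pow' hf, hcoe, h4,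
        leadingCoeff_eq, leadingCoeff_eq, ← ha]
  have hsum : ∑ i ∈ p.support, algebraMap L K (c i) * a ^ i = 0 := by
    have h0 : (Polynomial.eval₂ φ f p).coeff e = 0 := by rw [hroot]; rfl
    rw [Polynomial.eval₂_eq_sum, Polynomial.sum_def] at h0
    have hcs : (∑ i ∈ p.support, φ (p.coeff i) * f ^ i).coeff e
        = ∑ i ∈ p.support, (φ (p.coeff i) * f ^ i).coeff e := by
      classical
      exact map_sum
        ({ toFun := fun x : LaurentSeries K => x.coeff e,
           map_zero' := rfl, map_add' := fun x y => rfl } : LaurentSeries K →+ K) _ _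
    rw [hcs] at h0
    rw [← Finset.sum_congr rfl key]
    exact h0
  set q : Polynomial L := ∑ i ∈ p.support, Polynomial.monomial i (c i) with hq
  have hq₀ : q.coeff i₀ = c i₀ := by
    rw [hq, Polynomial.finset_sum_coeff]
    rw [Finset.sum_eq_single i₀]
    · rw [Polynomial.coeff_monomial, if_pos rfl]
    · intro b _ hb
      rw [Polynomial.coeff_monomial, if_neg hb]
    · intro h; exact absurd hi₀ h
  have hci₀ : c i₀ ≠ 0 := by
    intro h0
    have : algebraMap L K (c i₀) = (φ (p.coeff i₀)).coeff (e - i₀ • μ) := rfl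
    rw [h0, map_zero] at this
    have horder : e - i₀ • μ = (φ (p.coeff i₀)).order := by
      rw [he, hEi₀]
      show E i₀ - i₀ • μ = _
      rw [hE]
      exact add_sub_cancel_right _ _
    rw [horder] at this
    exact (mt coeff_order_eq_zero.1 (hΦ i₀ hi₀)) this.symm
  have hqne : q ≠ 0 := fun h0 => hci₀ (by rw [← hq₀, h0, Polynomial.coeff_zero])
  refine ⟨q, hqne, ?_⟩
  rw [hq, map_sum]
  calc ∑ i ∈ p.support, (Polynomial.aeval a) (Polynomial.monomial i (c i))
      = ∑ i ∈ p.support, algebraMap L K (c i) * a ^ i := by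
        refine Finset.sum_congr rfl fun i _ => ?_
        rw [Polynomial.aeval_monomial]
    _ = 0 := hsum

open Polynomial HahnSeries in
theorem main_forward
    {L K : Type*} [Field L] [Field K] [Algebra L K]
    (hfg : (⊤ : IntermediateField L K).FG) (f : LaurentSeries K)
    (hex : ∃ p : Polynomial (LaurentSeries L), p ≠ 0 ∧
        Polynomial.eval₂ (LaurentSeries.mapRingHom (algebraMap L K)) f p = 0)
    (n : ℤ) : IsAlgebraic L (f.coeff n) := by
  classical
  by_contra hn
  set S := {m : ℤ | ¬ IsAlgebraic L (f.coeff m)} with hSdef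
  have hSsub : S ⊆ Function.support f.coeff := by
    intro m hm
    simp only [Function.mem_support]
    intro h0
    exact hm (h0 ▸ isAlgebraic_zero)
  have hSwf : S.IsWF := f.isWF_support.mono hSsub
  have hSne : S.Nonempty := ⟨n, hn⟩
  set m := hSwf.min hSne with hm
  have hmS : m ∈ S := hSwf.min_mem hSne
  have hmin : ∀ k, k < m → ¬ k ∈ S := fun k hk hkS => hSwf.not_lt_min hSne hkS hk
  -- truncation
  set g : LaurentSeries K :=
    ⟨fun k => if k < m then f.coeff k else 0,
      f.isPWO_support.mono (by
        intro k hk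
        simp only [Function.mem_support] at hk ⊢
        intro h0
        apply hk
        by_cases hkm : k < m
        · rw [if_pos hkm]; exact h0
        · rw [if_neg hkm])⟩ with hg
  have hgcoeff : ∀ k, g.coeff k = if k < m then f.coeff k else 0 := fun k => rfl
  have hgalg : ∀ k, IsAlgebraic L (g.coeff k) := by
    intro k
    rw [hgcoeff]
    by_cases hkm : k < m
    · rw [if_pos hkm]
      by_contra hka
      exact hmin k hkm hka
    · rw [if_neg hkm]
      exact isAlgebraic_zero
  obtain ⟨pg, hpg, hgroot⟩ := LaurentSeriesAlg.exists_poly_of_coeff_isAlgebraic hfg g hgalg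
  obtain ⟨p, hp, hroot⟩ := hex
  set h := f - g with hh
  have hfm : f.coeff m ≠ 0 := fun h0 => hmS (h0 ▸ isAlgebraic_zero)
  have hhcoeffm : h.coeff m = f.coeff m := by
    rw [hh, HahnSeries.coeff_sub, hgcoeff, if_neg (lt_irrefl m), sub_zero]
  have hh0 : h ≠ 0 := by
    intro h0
    rw [h0] at hhcoeffm
    exact hfm (by rw [← hhcoeffm]; rfl)
  have hhlow : ∀ k, k < m → h.coeff k = 0 := by
    intro k hk
    rw [hh, HahnSeries.coeff_sub, hgcoeff, if_pos hk, sub_self]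
  have horder : h.order = m := by
    have h1 : h.order ≤ m := order_le_of_coeff_ne_zero (by rw [hhcoeffm]; exact hfm)
    rcases lt_or_eq_of_le h1 with hlt | heq
    · exact absurd (hhlow h.order hlt) (mt coeff_order_eq_zero.1 hh0)
    · exact heq
  -- h is algebraic over L((t))
  letI : Algebra (LaurentSeries L) (LaurentSeries K) :=
    (LaurentSeries.mapRingHom (algebraMap L K)).toAlgebra
  have hfalg : IsAlgebraic (LaurentSeries L) f := ⟨p, hp, hroot⟩
  have hgalg' : IsAlgebraic (LaurentSeries L) g := ⟨pg, hpg, hgroot⟩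
  have hhalg : IsAlgebraic (LaurentSeries L) h :=
    (hfalg.isIntegral.sub hgalg'.isIntegral).isAlgebraic
  obtain ⟨q, hq, hq0⟩ := hhalg
  have : IsAlgebraic L (h.coeff h.order) :=
    isAlgebraic_leadingCoeff_of_root hh0 hq hq0
  rw [horder, hhcoeffm] at this
  exact hmS this


/-- Let `K/L` be a finitely generated field extension.  Then the relative
algebraic closure of `L((t))` in `K((t))` equals `L̃((t))`, where `L̃` is the relative
algebraic closure of `L` in `K`: an element `f ∈ K((t))` is algebraic over `L((t))` if and
only if all of its coefficients are algebraic over `L`. -/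
theorem laurentSeries_isAlgebraic_iff_coeff_isAlgebraic
    {L K : Type*} [Field L] [Field K] [Algebra L K]
    (hfg : (⊤ : IntermediateField L K).FG) (f : LaurentSeries K) :
    (∃ p : Polynomial (LaurentSeries L), p ≠ 0 ∧
        Polynomial.eval₂ (LaurentSeries.mapRingHom (algebraMap L K)) f p = 0)
      ↔ ∀ n : ℤ, IsAlgebraic L (f.coeff n) := by
  constructor
  · exact fun hex n => main_forward hfg f hex n
  · exact fun h => LaurentSeriesAlg.exists_poly_of_coeff_isAlgebraic hfg f h
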